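/- Let d ≥ 2 be an integer. For every ε > 0 there exists a constant C = C(d, ε) > 0 such that the following holds: for every real X ≥ 1, every polynomial f ∈ ℤ[X] of degree d all of whose coefficients have absolute value at most X, and every integer H ≥ 1, the number of quadruples (x, y, z, w) of integers with 1 ≤ x, y, z, w ≤ H and f(x) + f(y) = f(z) + f(w) is at most C · H² · (HX)^ε. -/

import Mathlib

set_option maxHeartbeats 1000000

open Finset Polynomial



lemma divisor_bound (δ : ℝ) (hδ : 0 < δ) :
    ∃ C : ℝ, 1 ≤ C ∧ ∀ n : ℕ, n ≠ 0 → (n.divisors.card : ℝ) ≤ C * (n : ℝ) ^ δ := by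
  have hlog2 : (0:ℝ) < Real.log 2 := Real.log_pos (by norm_num)
  set C0 : ℝ := 1 + 1 / (δ * Real.log 2) with hC0def
  have hC0one : 1 ≤ C0 := by
    have : 0 < 1 / (δ * Real.log 2) := by positivity
    rw [hC0def]; linarith
  have hC0mul : 1 ≤ C0 * (δ * Real.log 2) := by
    have h1 : (1 / (δ * Real.log 2)) * (δ * Real.log 2) = 1 := by
      field_simp
    have h2 : 0 < δ * Real.log 2 := by positivity
    rw [hC0def]; nlinarith
  set B : ℝ := (2 : ℝ) ^ (1 / δ) with hBdef
  set N0 : ℕ := ⌈B⌉₊ with hN0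
  refine ⟨C0 ^ N0, one_le_pow₀ hC0one, ?_⟩
  intro n hn
  -- per-prime bound
  have key : ∀ p ∈ n.primeFactors,
      ((n.factorization p + 1 : ℕ) : ℝ) ≤
        (if (p:ℝ) < B then C0 else 1) * (((p : ℝ) ^ (n.factorization p)) ^ δ) := by
    intro p hp
    have hpp : p.Prime := Nat.prime_of_mem_primeFactors hp
    have hp2 : (2:ℝ) ≤ (p:ℝ) := by exact_mod_cast hpp.two_le
    set a : ℕ := n.factorization p
    have hpow : ((p:ℝ) ^ a) ^ δ = ((p:ℝ) ^ δ) ^ a := by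
      rw [← Real.rpow_natCast (p:ℝ) a, ← Real.rpow_mul (by linarith),
        mul_comm, Real.rpow_mul (by linarith), Real.rpow_natCast]
    by_cases hsmall : (p:ℝ) < B
    · rw [if_pos hsmall, hpow]
      have h2d : ((2:ℝ) ^ δ) ^ a ≤ ((p:ℝ) ^ δ) ^ a := by
        apply pow_le_pow_left₀ (by positivity)
        exact Real.rpow_le_rpow (by norm_num) hp2 hδ.le
      have hexp : (1 + a * (δ * Real.log 2) : ℝ) ≤ ((2:ℝ) ^ δ) ^ a := by
        have : ((2:ℝ) ^ δ) ^ a = Real.exp (a * (δ * Real.log 2)) := by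
          rw [← Real.rpow_natCast ((2:ℝ)^δ) a, ← Real.rpow_mul (by norm_num),
            Real.rpow_def_of_pos (by norm_num)]
          ring_nf
        rw [this]
        have := Real.add_one_le_exp ((a : ℝ) * (δ * Real.log 2))
        linarith
      have hfin : ((a:ℝ) + 1) ≤ C0 * (1 + a * (δ * Real.log 2)) := by
        have ha0 : (0:ℝ) ≤ a := Nat.cast_nonneg a
        have : (a:ℝ) ≤ C0 * (δ * Real.log 2) * a := by nlinarith
        nlinarith
      have hC0pos : (0:ℝ) < C0 := by linarith
      push_cast
      calc ((a:ℝ) + 1) ≤ C0 * (1 + a * (δ * Real.log 2)) := hfin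
        _ ≤ C0 * (((2:ℝ) ^ δ) ^ a) := by nlinarith
        _ ≤ C0 * (((p:ℝ) ^ δ) ^ a) := by nlinarith
    · rw [if_neg hsmall, one_mul, hpow]
      have hpB : B ≤ (p:ℝ) := not_lt.mp hsmall
      have h2 : (2:ℝ) ≤ (p:ℝ) ^ δ := by
        have : B ^ δ ≤ (p:ℝ) ^ δ := Real.rpow_le_rpow (by positivity) hpB hδ.le
        rwa [hBdef, ← Real.rpow_mul (by norm_num), one_div_mul_cancel hδ.ne',
          Real.rpow_one] at this
      calc ((a + 1 : ℕ) : ℝ) ≤ ((2 ^ a : ℕ) : ℝ) := by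
            exact_mod_cast (Nat.lt_two_pow_self (n := a))
        _ = (2:ℝ) ^ a := by push_cast; ring
        _ ≤ ((p:ℝ) ^ δ) ^ a := pow_le_pow_left₀ (by norm_num) h2 a
  -- now the product
  have hτ : (n.divisors.card : ℝ) = ∏ p ∈ n.primeFactors, ((n.factorization p + 1 : ℕ) : ℝ) := by
    rw [Nat.card_divisors hn]
    push_cast
    ring
  have hnδ : (n : ℝ) ^ δ = ∏ p ∈ n.primeFactors, ((p : ℝ) ^ (n.factorization p)) ^ δ := by
    have h1 : (n : ℝ) = ∏ p ∈ n.primeFactors, (p : ℝ) ^ (n.factorization p) := by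
      conv_lhs => rw [← Nat.factorization_prod_pow_eq_self hn]
      rw [Nat.prod_factorization_eq_prod_primeFactors]
      push_cast
      rfl
    rw [Real.finset_prod_rpow _ _ (fun i _ => by positivity) δ, ← h1]
  rw [hτ, hnδ]
  have hsplit : ∀ p ∈ n.primeFactors, (0:ℝ) ≤ (if (p:ℝ) < B then C0 else 1) := by
    intro p _; split <;> [linarith; norm_num]
  calc (∏ p ∈ n.primeFactors, ((n.factorization p + 1 : ℕ) : ℝ))
      ≤ ∏ p ∈ n.primeFactors,
          ((if (p:ℝ) < B then C0 else 1) * (((p : ℝ) ^ (n.factorization p)) ^ δ)) := by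
        apply Finset.prod_le_prod (fun p _ => by positivity) key
    _ = (∏ p ∈ n.primeFactors, (if (p:ℝ) < B then C0 else 1)) *
          (∏ p ∈ n.primeFactors, ((p : ℝ) ^ (n.factorization p)) ^ δ) := Finset.prod_mul_distrib
    _ ≤ C0 ^ N0 * ∏ p ∈ n.primeFactors, ((p : ℝ) ^ (n.factorization p)) ^ δ := by
        apply mul_le_mul_of_nonneg_right _ (by positivity)
        have heq : (∏ p ∈ n.primeFactors, (if (p:ℝ) < B then C0 else 1))
            = C0 ^ (n.primeFactors.filter (fun p : ℕ => (p:ℝ) < B)).card := by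
          rw [Finset.prod_ite, Finset.prod_const, Finset.prod_const, one_pow, mul_one]
        rw [heq]
        apply pow_le_pow_right₀ hC0one
        have hsub : (n.primeFactors.filter (fun p : ℕ => (p:ℝ) < B)) ⊆ Finset.range N0 := by
          intro p hp
          simp only [Finset.mem_filter] at hp
          rw [Finset.mem_range]
          have hB : B ≤ (N0 : ℝ) := Nat.le_ceil B
          exact_mod_cast lt_of_lt_of_le hp.2 hB
        exact Finset.card_le_card hsub |>.trans (by simp)



lemma card_roots_filter {p : Polynomial ℤ} (hp : p ≠ 0) (s : Finset ℤ) :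
    (s.filter fun x => p.eval x = 0).card ≤ p.natDegree := by
  have hsub : (s.filter fun x => p.eval x = 0) ⊆ p.roots.toFinset := by
    intro x hx
    simp only [Finset.mem_filter] at hx
    rw [Multiset.mem_toFinset, Polynomial.mem_roots hp]
    exact hx.2
  calc (s.filter fun x => p.eval x = 0).card ≤ p.roots.toFinset.card :=
        Finset.card_le_card hsub
    _ ≤ Multiset.card p.roots := p.roots.toFinset_card_le
    _ ≤ p.natDegree := p.card_roots'

lemma shift_ne_zero {f : Polynomial ℤ} {d : ℕ} (hd : 2 ≤ d) (hdeg : f.natDegree = d)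
    {a : ℤ} (ha : a ≠ 0) (M : ℤ) : f - f.comp (X - C a) - C M ≠ 0 := by
  intro h
  have hfne : f ≠ 0 := by
    intro h0; rw [h0, natDegree_zero] at hdeg; omega
  have hcoeff : (f - f.comp (X - C a) - C M).coeff (d - 1) = 0 := by rw [h]; simp
  have hcomp : f.comp (X - C a) = Polynomial.taylor (-a) f := by
    rw [Polynomial.taylor_apply]
    congr 1
    rw [map_neg, sub_eq_add_neg]
  have htay : (Polynomial.taylor (-a) f).coeff (d - 1) =
      (Polynomial.hasseDeriv (d - 1) f).eval (-a) := Polynomial.taylor_coeff (-a) f (d-1)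
  have hdeg1 : (Polynomial.hasseDeriv (d - 1) f).natDegree = 1 := by
    rw [Polynomial.natDegree_hasseDeriv, hdeg]; omega
  have heval : (Polynomial.hasseDeriv (d - 1) f).eval (-a) =
      (Polynomial.hasseDeriv (d - 1) f).coeff 0 +
      (Polynomial.hasseDeriv (d - 1) f).coeff 1 * (-a) := by
    conv_lhs => rw [Polynomial.eval_eq_sum_range' (n := 2) (by omega)]
    rw [Finset.sum_range_succ, Finset.sum_range_succ]
    simp
  have hc0 : (Polynomial.hasseDeriv (d - 1) f).coeff 0 = f.coeff (d - 1) := by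
    rw [Polynomial.hasseDeriv_coeff]
    simp [Nat.zero_add, Nat.choose_self]
  have hc1 : (Polynomial.hasseDeriv (d - 1) f).coeff 1 = d * f.coeff d := by
    rw [Polynomial.hasseDeriv_coeff]
    have h1 : 1 + (d - 1) = d := by omega
    rw [h1]
    have h2 : d.choose (d - 1) = d := by
      have h3 : d - (d - 1) = 1 := by omega
      have := Nat.choose_symm (n := d) (k := d - 1) (by omega)
      rw [h3] at this
      rw [← this, Nat.choose_one_right]
    rw [h2]
  have hCM : (C M).coeff (d - 1) = 0 := by
    rw [Polynomial.coeff_C, if_neg (by omega)]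
  rw [Polynomial.coeff_sub, Polynomial.coeff_sub, hcomp, htay, heval, hc0, hc1, hCM] at hcoeff
  have hlead : f.coeff d ≠ 0 := by
    rw [← hdeg]
    exact Polynomial.leadingCoeff_ne_zero.mpr hfne
  have : (d : ℤ) * f.coeff d * a = 0 := by linarith
  have hd0 : (d : ℤ) ≠ 0 := by exact_mod_cast (by omega : d ≠ 0)
  exact (mul_ne_zero (mul_ne_zero hd0 hlead) ha) this



lemma sum_fiber_le {α β : Type*} [DecidableEq α] [DecidableEq β] (s : Finset α) (g : α → β)
    (S' : Finset β) : ∑ M ∈ S', (s.filter fun p => g p = M).card ≤ s.card := by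
  have h : ∑ M ∈ S', (s.filter fun p => g p = M).card
      = (s.filter fun p => g p ∈ S').card := by
    rw [Finset.card_eq_sum_card_fiberwise (f := g) (t := S') (s := s.filter fun p => g p ∈ S')
      (fun x hx => (Finset.mem_filter.mp hx).2)]
    apply Finset.sum_congr rfl
    intro M hM
    congr 1
    ext p
    simp only [Finset.mem_filter]
    exact ⟨fun h => ⟨⟨h.1, h.2 ▸ hM⟩, h.2⟩, fun h => ⟨h.1.1, h.2⟩⟩
  rw [h]
  exact Finset.card_filter_le s _

lemma A0_card {f : Polynomial ℤ} {d : ℕ} (hd : 2 ≤ d) (hdeg : f.natDegree = d) (H : ℤ) :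
    (((Finset.Icc 1 H) ×ˢ (Finset.Icc 1 H)).filter
      (fun p : ℤ × ℤ => f.eval p.1 - f.eval p.2 = 0)).card ≤ (Finset.Icc 1 H).card * d := by
  set A := ((Finset.Icc 1 H) ×ˢ (Finset.Icc 1 H)).filter
      (fun p : ℤ × ℤ => f.eval p.1 - f.eval p.2 = 0) with hA
  have hmap : ∀ p ∈ A, p.2 ∈ Finset.Icc 1 H := by
    intro p hp
    simp only [hA, Finset.mem_coe, Finset.mem_filter, Finset.mem_product] at hp
    exact hp.1.2
  rw [Finset.card_eq_sum_card_fiberwise hmap]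
  have hfib : ∀ z ∈ Finset.Icc 1 H, (A.filter fun p => p.2 = z).card ≤ d := by
    intro z _
    have hne : f - C (f.eval z) ≠ 0 := by
      intro h
      have h2 : f = C (f.eval z) := by linear_combination (norm := ring_nf) h
      rw [h2, natDegree_C] at hdeg
      omega
    calc (A.filter fun p => p.2 = z).card
        ≤ ((Finset.Icc 1 H).filter fun x => (f - C (f.eval z)).eval x = 0).card := by
          apply Finset.card_le_card_of_injOn (fun p => p.1)
          · intro p hp
            simp only [hA, Finset.mem_coe, Finset.mem_filter, Finset.mem_product] at hp ⊢
            refine ⟨hp.1.1.1, ?_⟩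
            rw [eval_sub, eval_C]
            rw [hp.2] at hp
            linarith [hp.1.2]
          · intro p hp q hq hpq
            simp only [hA, Finset.mem_coe, Finset.mem_filter, Finset.mem_product] at hp hq
            exact Prod.ext hpq (hp.2.trans hq.2.symm)
      _ ≤ (f - C (f.eval z)).natDegree := card_roots_filter hne _
      _ ≤ d := by
          calc (f - C (f.eval z)).natDegree ≤ max f.natDegree (C (f.eval z)).natDegree :=
              natDegree_sub_le _ _
            _ ≤ d := by rw [hdeg, natDegree_C]; omega
  calc ∑ z ∈ Finset.Icc 1 H, (A.filter fun p => p.2 = z).card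
      ≤ ∑ z ∈ Finset.Icc 1 H, d := Finset.sum_le_sum hfib
    _ = (Finset.Icc 1 H).card * d := by rw [Finset.sum_const, smul_eq_mul]

lemma AM_card {f : Polynomial ℤ} {d : ℕ} (hd : 2 ≤ d) (hdeg : f.natDegree = d) (H : ℤ)
    {M : ℤ} (hM : M ≠ 0) :
    (((Finset.Icc 1 H) ×ˢ (Finset.Icc 1 H)).filter
      (fun p : ℤ × ℤ => f.eval p.1 - f.eval p.2 = M)).card
      ≤ 2 * M.natAbs.divisors.card * d := by
  set A := ((Finset.Icc 1 H) ×ˢ (Finset.Icc 1 H)).filter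
      (fun p : ℤ × ℤ => f.eval p.1 - f.eval p.2 = M) with hA
  set Dset : Finset ℤ := M.natAbs.divisors.image (fun n : ℕ => (n : ℤ)) ∪
      M.natAbs.divisors.image (fun n : ℕ => -(n : ℤ)) with hD
  have hmap : ∀ p ∈ A, p.1 - p.2 ∈ Dset := by
    intro p hp
    simp only [hA, Finset.mem_coe, Finset.mem_filter, Finset.mem_product] at hp
    have hdvd : p.1 - p.2 ∣ M := hp.2 ▸ sub_dvd_eval_sub p.1 p.2 f
    have hdvd2 : (p.1 - p.2).natAbs ∣ M.natAbs := Int.natAbs_dvd_natAbs.mpr hdvd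
    have hmem : (p.1 - p.2).natAbs ∈ M.natAbs.divisors :=
      Nat.mem_divisors.mpr ⟨hdvd2, by simpa using hM⟩
    rcases Int.natAbs_eq (p.1 - p.2) with h | h
    · exact Finset.mem_union_left _ (Finset.mem_image.mpr ⟨_, hmem, h.symm⟩)
    · exact Finset.mem_union_right _ (Finset.mem_image.mpr ⟨_, hmem, by rw [← h]⟩)
  rw [Finset.card_eq_sum_card_fiberwise hmap]
  have hfib : ∀ a ∈ Dset, (A.filter fun p => p.1 - p.2 = a).card ≤ d := by
    intro a ha
    have ha0 : a ≠ 0 := by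
      intro h0
      simp only [hD, Finset.mem_union, Finset.mem_image, h0] at ha
      rcases ha with ⟨n, hn, hn0⟩ | ⟨n, hn, hn0⟩ <;>
      · have : n = 0 := by omega
        subst this
        exact Nat.pos_of_mem_divisors hn |>.ne' rfl
    set g := f - f.comp (X - C a) - C M with hg
    have hgne : g ≠ 0 := shift_ne_zero hd hdeg ha0 M
    calc (A.filter fun p => p.1 - p.2 = a).card
        ≤ ((Finset.Icc 1 H).filter fun x => g.eval x = 0).card := by
          apply Finset.card_le_card_of_injOn (fun p => p.1)
          · intro p hp
            simp only [hA, Finset.mem_coe, Finset.mem_filter, Finset.mem_product] at hp ⊢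
            refine ⟨hp.1.1.1, ?_⟩
            have hz : p.2 = p.1 - a := by linarith [hp.2]
            simp only [hg, eval_sub, eval_comp, eval_X, eval_C]
            rw [← hz]
            linarith [hp.1.2]
          · intro p hp q hq hpq
            simp only [hA, Finset.mem_coe, Finset.mem_filter, Finset.mem_product] at hp hq
            have : p.2 = q.2 := by
              have h1 := hp.2
              have h2 := hq.2
              simp only at hpq
              omega
            exact Prod.ext hpq this
      _ ≤ g.natDegree := card_roots_filter hgne _
      _ ≤ d := by
          have h1 : (f.comp (X - C a)).natDegree = d := by
            rw [natDegree_comp, natDegree_X_sub_C, hdeg, mul_one]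
          calc g.natDegree ≤ max (f - f.comp (X - C a)).natDegree (C M).natDegree :=
              natDegree_sub_le _ _
            _ ≤ d := by
              rw [natDegree_C]
              have := natDegree_sub_le f (f.comp (X - C a))
              rw [h1, hdeg] at this
              omega
  calc ∑ a ∈ Dset, (A.filter fun p => p.1 - p.2 = a).card
      ≤ ∑ a ∈ Dset, d := Finset.sum_le_sum hfib
    _ = Dset.card * d := by rw [Finset.sum_const, smul_eq_mul]
    _ ≤ 2 * M.natAbs.divisors.card * d := by
        have := Finset.card_union_le (M.natAbs.divisors.image (fun n : ℕ => (n : ℤ)))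
          (M.natAbs.divisors.image (fun n : ℕ => -(n : ℤ)))
        have h1 := Finset.card_image_le (s := M.natAbs.divisors) (f := fun n : ℕ => (n : ℤ))
        have h2 := Finset.card_image_le (s := M.natAbs.divisors) (f := fun n : ℕ => -(n : ℤ))
        have : Dset.card ≤ 2 * M.natAbs.divisors.card := by
          rw [hD]; omega
        exact Nat.mul_le_mul_right d this



lemma eval_bound {f : Polynomial ℤ} {d : ℕ} (hdeg : f.natDegree = d) {X HR : ℝ}
    (hcoeff : ∀ i, (|f.coeff i| : ℝ) ≤ X) (hH : 1 ≤ HR) {t : ℤ} (ht1 : 1 ≤ t)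
    (ht2 : (t : ℝ) ≤ HR) : ((|f.eval t| : ℤ) : ℝ) ≤ (d + 1) * (X * HR ^ d) := by
  have heval : f.eval t = ∑ i ∈ Finset.range (d + 1), f.coeff i * t ^ i := by
    conv_lhs => rw [Polynomial.eval_eq_sum_range' (n := d + 1) (by omega : f.natDegree < d + 1)]
  rw [heval]
  push_cast
  calc |∑ i ∈ Finset.range (d + 1), (f.coeff i : ℝ) * (t : ℝ) ^ i|
      ≤ ∑ i ∈ Finset.range (d + 1), |(f.coeff i : ℝ) * (t : ℝ) ^ i| :=
        Finset.abs_sum_le_sum_abs _ _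
    _ ≤ ∑ i ∈ Finset.range (d + 1), X * HR ^ d := by
        apply Finset.sum_le_sum
        intro i hi
        rw [abs_mul, abs_pow]
        have ht0 : (0:ℝ) ≤ (t:ℝ) := by exact_mod_cast le_trans zero_le_one ht1
        have habs : |(t:ℝ)| = (t:ℝ) := abs_of_nonneg ht0
        have h1 : |(t:ℝ)| ^ i ≤ HR ^ i := by
          rw [habs]; exact pow_le_pow_left₀ ht0 ht2 i
        have h2 : HR ^ i ≤ HR ^ d := by
          apply pow_le_pow_right₀ hH
          simpa using Nat.lt_succ_iff.mp (Finset.mem_range.mp hi)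
        have h3 : (0:ℝ) ≤ |(f.coeff i : ℝ)| := abs_nonneg _
        have h4 := hcoeff i
        push_cast at h4
        have h5 : (0:ℝ) ≤ HR ^ i := by positivity
        nlinarith
    _ = (d + 1) * (X * HR ^ d) := by
        rw [Finset.sum_const, Finset.card_range, nsmul_eq_mul]
        push_cast; ring



theorem stmt_9 (d : ℕ) (hd : 2 ≤ d) (ε : ℝ) (hε : 0 < ε) :
    ∃ C : ℝ, 0 < C ∧ ∀ X : ℝ, 1 ≤ X → ∀ f : Polynomial ℤ, f.natDegree = d →
      (∀ i, (|f.coeff i| : ℝ) ≤ X) → ∀ H : ℤ, 1 ≤ H →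
      ((((Finset.Icc 1 H) ×ˢ (Finset.Icc 1 H) ×ˢ (Finset.Icc 1 H) ×ˢ (Finset.Icc 1 H)).filter
          fun q : ℤ × ℤ × ℤ × ℤ =>
            f.eval q.1 + f.eval q.2.1 = f.eval q.2.2.1 + f.eval q.2.2.2).card : ℝ)
        ≤ C * (H : ℝ) ^ 2 * ((H : ℝ) * X) ^ ε := by
  have hdR : (2:ℝ) ≤ (d:ℝ) := by exact_mod_cast hd
  have hδpos : 0 < min 1 (ε / d) := lt_min one_pos (div_pos hε (by linarith))
  obtain ⟨C1, hC1, hdiv⟩ := divisor_bound (min 1 (ε / d)) hδpos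
  set δ := min 1 (ε / d) with hδdef
  refine ⟨(d:ℝ)^2 + 2*d*C1*((d:ℝ)+2)^ε, by positivity, ?_⟩
  intro X hX f hfd hcoeff H hH
  have hH1 : (1:ℝ) ≤ (H:ℝ) := by exact_mod_cast hH
  have hXH1 : (1:ℝ) ≤ (H:ℝ) * X := by nlinarith
  set I := Finset.Icc (1:ℤ) H with hI
  have hIcard : ((I.card : ℕ) : ℝ) = (H:ℝ) := by
    rw [hI, Int.card_Icc]
    have h1 : H + 1 - 1 = H := by ring
    rw [h1]
    exact_mod_cast congrArg (Int.cast : ℤ → ℝ) (Int.toNat_of_nonneg (by linarith))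
  set T := ((I ×ˢ I ×ˢ I ×ˢ I).filter fun q : ℤ × ℤ × ℤ × ℤ =>
      f.eval q.1 + f.eval q.2.1 = f.eval q.2.2.1 + f.eval q.2.2.2) with hT
  set k : ℤ × ℤ × ℤ × ℤ → ℤ := fun q => f.eval q.1 - f.eval q.2.2.1 with hk
  set A : ℤ → Finset (ℤ × ℤ) := fun M =>
      (I ×ˢ I).filter (fun p : ℤ × ℤ => f.eval p.1 - f.eval p.2 = M) with hAdef
  set S := T.image k with hS
  -- step 1: fiber decomposition
  have h1 : T.card = ∑ M ∈ S, (T.filter fun q => k q = M).card :=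
    Finset.card_eq_sum_card_fiberwise (fun q hq => Finset.mem_image_of_mem k hq)
  -- step 2: each fiber ≤ (A M).card ^2
  have h2 : ∀ M, (T.filter fun q => k q = M).card ≤ (A M).card * (A M).card := by
    intro M
    have hle := Finset.card_le_card_of_injOn
      (f := fun q : ℤ × ℤ × ℤ × ℤ => ((q.1, q.2.2.1), (q.2.2.2, q.2.1)))
      (s := T.filter fun q => k q = M) (t := (A M) ×ˢ (A M)) ?_ ?_
    · simpa [Finset.card_product] using hle
    · intro q hq
      simp only [hT, hAdef, hk, Finset.mem_coe, Finset.mem_filter, Finset.mem_product] at hq ⊢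
      obtain ⟨⟨⟨hx, hy, hz, hw⟩, heq⟩, hkq⟩ := hq
      exact ⟨⟨⟨hx, hz⟩, hkq⟩, ⟨⟨hw, hy⟩, by linarith⟩⟩
    · rintro ⟨x, y, z, w⟩ - ⟨x', y', z', w'⟩ - hpq
      simp only [Prod.mk.injEq] at hpq
      obtain ⟨⟨h1, h2⟩, h3, h4⟩ := hpq
      simp [h1, h2, h3, h4]
  -- cast to ℝ and split S
  have h3 : (T.card : ℝ) ≤ ∑ M ∈ S, ((A M).card : ℝ) * ((A M).card : ℝ) := by
    rw [h1]
    push_cast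
    apply Finset.sum_le_sum
    intro M _
    exact_mod_cast h2 M
  have hsplit := Finset.sum_filter_add_sum_filter_not S (fun M => M ≠ 0)
    (fun M => ((A M).card : ℝ) * ((A M).card : ℝ))
  -- zero part
  have hzero : ∑ M ∈ S.filter (fun M => ¬ M ≠ 0), ((A M).card : ℝ) * ((A M).card : ℝ)
      ≤ ((d:ℝ) * (H:ℝ)) * ((d:ℝ) * (H:ℝ)) := by
    have hsub : S.filter (fun M => ¬ M ≠ 0) ⊆ {0} := by
      intro M hM
      simp only [Finset.mem_filter, not_not] at hM
      simp [hM.2]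
    calc ∑ M ∈ S.filter (fun M => ¬ M ≠ 0), ((A M).card : ℝ) * ((A M).card : ℝ)
        ≤ ∑ M ∈ ({0} : Finset ℤ), ((A M).card : ℝ) * ((A M).card : ℝ) := by
          apply Finset.sum_le_sum_of_subset_of_nonneg hsub
          intro M _ _; positivity
      _ = ((A 0).card : ℝ) * ((A 0).card : ℝ) := by simp
      _ ≤ ((d:ℝ) * (H:ℝ)) * ((d:ℝ) * (H:ℝ)) := by
          have := A0_card hd hfd H
          have hA0 : ((A 0).card : ℝ) ≤ (d:ℝ) * (H:ℝ) := by
            rw [hAdef]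
            calc (((I ×ˢ I).filter (fun p : ℤ × ℤ => f.eval p.1 - f.eval p.2 = 0)).card : ℝ)
                ≤ ((I.card * d : ℕ) : ℝ) := by exact_mod_cast this
              _ = (d:ℝ) * (H:ℝ) := by push_cast; rw [hIcard]; ring
          have h0 : (0:ℝ) ≤ ((A 0).card : ℝ) := by positivity
          nlinarith
  -- nonzero part
  set D : ℝ := 2 * (d:ℝ) * C1 * ((d:ℝ)+2)^ε * ((H:ℝ) * X)^ε with hDdef
  have hMbound : ∀ M ∈ S, M ≠ 0 → ((A M).card : ℝ) ≤ D := by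
    intro M hMS hM0
    -- size bound on |M|
    obtain ⟨q, hqT, hqk⟩ := Finset.mem_image.mp hMS
    simp only [hT, Finset.mem_filter, Finset.mem_product] at hqT
    obtain ⟨⟨hx, hy, hz, hw⟩, -⟩ := hqT
    rw [hI, Finset.mem_Icc] at hx hz
    have hxH : ((q.1 : ℤ) : ℝ) ≤ (H:ℝ) := by exact_mod_cast hx.2
    have hzH : ((q.2.2.1 : ℤ) : ℝ) ≤ (H:ℝ) := by exact_mod_cast hz.2
    have hb1 := eval_bound hfd hcoeff hH1 hx.1 hxH
    have hb2 := eval_bound hfd hcoeff hH1 hz.1 hzH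
    set B : ℝ := ((d:ℝ) + 2) * ((H:ℝ) * X) with hBdef
    have hB1 : (1:ℝ) ≤ B := by nlinarith
    have hNB : ((M.natAbs : ℕ) : ℝ) ≤ B ^ d := by
      have hMabs : ((M.natAbs : ℕ) : ℝ) = |(M:ℝ)| := by
        rw [Nat.cast_natAbs, Int.cast_abs]
      have hMval : |(M:ℝ)| ≤ ((d:ℝ)+1) * (X * (H:ℝ)^d) + ((d:ℝ)+1) * (X * (H:ℝ)^d) := by
        rw [← hqk, hk]
        push_cast
        calc |((f.eval q.1 : ℤ) : ℝ) - ((f.eval q.2.2.1 : ℤ) : ℝ)|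
            ≤ |((f.eval q.1 : ℤ) : ℝ)| + |((f.eval q.2.2.1 : ℤ) : ℝ)| := abs_sub _ _
          _ ≤ ((d:ℝ)+1) * (X * (H:ℝ)^d) + ((d:ℝ)+1) * (X * (H:ℝ)^d) := by
              push_cast at hb1 hb2
              push_cast
              gcongr
      rw [hMabs]
      have hXd : X ≤ X ^ d := le_self_pow₀ hX (by omega)
      have hdd : 2 * ((d:ℝ)+1) ≤ ((d:ℝ)+2)^d := by
        have h22 : ((d:ℝ)+2)^2 ≤ ((d:ℝ)+2)^d := pow_le_pow_right₀ (by linarith) hd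
        nlinarith
      have hBd : B ^ d = ((d:ℝ)+2)^d * ((H:ℝ)^d * X^d) := by
        rw [hBdef]; rw [mul_pow, mul_pow]
      rw [hBd]
      have hX0 : (0:ℝ) ≤ X := by linarith
      have hHd : (0:ℝ) ≤ (H:ℝ)^d := by positivity
      calc |(M:ℝ)| ≤ 2 * ((d:ℝ)+1) * (X * (H:ℝ)^d) := by linarith
        _ ≤ ((d:ℝ)+2)^d * (X * (H:ℝ)^d) := by
            apply mul_le_mul_of_nonneg_right hdd (by positivity)
        _ ≤ ((d:ℝ)+2)^d * (X^d * (H:ℝ)^d) := by gcongr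
        _ = ((d:ℝ)+2)^d * ((H:ℝ)^d * X^d) := by ring
    -- divisor bound
    have hNa0 : M.natAbs ≠ 0 := by simpa using hM0
    have hτ := hdiv M.natAbs hNa0
    have hrpow : ((M.natAbs : ℕ) : ℝ) ^ δ ≤ ((d:ℝ)+2)^ε * ((H:ℝ) * X)^ε := by
      have hB0 : (0:ℝ) ≤ B := by linarith
      have hstep1 : ((M.natAbs : ℕ) : ℝ) ^ δ ≤ (B ^ d) ^ δ :=
        Real.rpow_le_rpow (by positivity) hNB hδpos.le
      have hstep2 : (B ^ d : ℝ) ^ δ = B ^ ((d:ℝ) * δ) := by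
        rw [← Real.rpow_natCast B d, ← Real.rpow_mul hB0]
      have hstep3 : B ^ ((d:ℝ) * δ) ≤ B ^ ε := by
        apply Real.rpow_le_rpow_of_exponent_le hB1
        have : δ ≤ ε / d := min_le_right _ _
        calc (d:ℝ) * δ ≤ (d:ℝ) * (ε / d) := by nlinarith
          _ = ε := by field_simp
      have hstep4 : B ^ ε = ((d:ℝ)+2)^ε * ((H:ℝ) * X)^ε := by
        rw [hBdef, Real.mul_rpow (by linarith) (by linarith)]
      calc ((M.natAbs : ℕ) : ℝ) ^ δ ≤ (B ^ d) ^ δ := hstep1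
        _ = B ^ ((d:ℝ) * δ) := hstep2
        _ ≤ B ^ ε := hstep3
        _ = ((d:ℝ)+2)^ε * ((H:ℝ) * X)^ε := hstep4
    have hAM := AM_card hd hfd H hM0
    calc ((A M).card : ℝ) ≤ ((2 * M.natAbs.divisors.card * d : ℕ) : ℝ) := by
          rw [hAdef]; exact_mod_cast hAM
      _ = 2 * ((M.natAbs.divisors.card : ℕ) : ℝ) * (d:ℝ) := by push_cast; ring
      _ ≤ 2 * (C1 * ((M.natAbs : ℕ) : ℝ) ^ δ) * (d:ℝ) := by
          have : (0:ℝ) ≤ (d:ℝ) := by linarith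
          nlinarith [hτ]
      _ ≤ 2 * (C1 * (((d:ℝ)+2)^ε * ((H:ℝ) * X)^ε)) * (d:ℝ) := by
          have hC10 : (0:ℝ) < C1 := by linarith
          gcongr
      _ = D := by rw [hDdef]; ring
  have hnonzero : ∑ M ∈ S.filter (fun M => M ≠ 0), ((A M).card : ℝ) * ((A M).card : ℝ)
      ≤ D * ((H:ℝ) * (H:ℝ)) := by
    have hD0 : 0 ≤ D := by
      rw [hDdef]
      have : (0:ℝ) < C1 := by linarith
      positivity
    calc ∑ M ∈ S.filter (fun M => M ≠ 0), ((A M).card : ℝ) * ((A M).card : ℝ)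
        ≤ ∑ M ∈ S.filter (fun M => M ≠ 0), D * ((A M).card : ℝ) := by
          apply Finset.sum_le_sum
          intro M hM
          simp only [Finset.mem_filter] at hM
          have := hMbound M hM.1 hM.2
          have h0 : (0:ℝ) ≤ ((A M).card : ℝ) := by positivity
          nlinarith
      _ = D * ∑ M ∈ S.filter (fun M => M ≠ 0), ((A M).card : ℝ) := by
          rw [Finset.mul_sum]
      _ ≤ D * ((H:ℝ) * (H:ℝ)) := by
          apply mul_le_mul_of_nonneg_left _ hD0
          have hsum := sum_fiber_le (I ×ˢ I) (fun p : ℤ × ℤ => f.eval p.1 - f.eval p.2)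
            (S.filter (fun M => M ≠ 0))
          have hcast : ∑ M ∈ S.filter (fun M => M ≠ 0), ((A M).card : ℝ)
              ≤ (((I ×ˢ I).card : ℕ) : ℝ) := by
            exact_mod_cast hsum
          calc ∑ M ∈ S.filter (fun M => M ≠ 0), ((A M).card : ℝ)
              ≤ (((I ×ˢ I).card : ℕ) : ℝ) := hcast
            _ = (H:ℝ) * (H:ℝ) := by rw [Finset.card_product]; push_cast; rw [hIcard]
  -- combine
  have hfinal : (T.card : ℝ) ≤ ((d:ℝ) * (H:ℝ))^2 + D * ((H:ℝ) * (H:ℝ)) := by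
    calc (T.card : ℝ) ≤ ∑ M ∈ S, ((A M).card : ℝ) * ((A M).card : ℝ) := h3
      _ = _ + _ := hsplit.symm
      _ ≤ D * ((H:ℝ) * (H:ℝ)) + ((d:ℝ) * (H:ℝ)) * ((d:ℝ) * (H:ℝ)) := by
          exact add_le_add hnonzero hzero
      _ = ((d:ℝ) * (H:ℝ))^2 + D * ((H:ℝ) * (H:ℝ)) := by ring
  have hone : (1:ℝ) ≤ ((H:ℝ) * X) ^ ε := by
    rw [← Real.one_rpow ε]
    exact Real.rpow_le_rpow (by norm_num) hXH1 hε.le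
  have hrpos : (0:ℝ) < ((H:ℝ) * X) ^ ε := by linarith
  calc (T.card : ℝ) ≤ ((d:ℝ) * (H:ℝ))^2 + D * ((H:ℝ) * (H:ℝ)) := hfinal
    _ ≤ ((d:ℝ)^2 + 2*d*C1*((d:ℝ)+2)^ε) * (H : ℝ) ^ 2 * ((H : ℝ) * X) ^ ε := by
        rw [hDdef]
        have hC10 : (0:ℝ) < C1 := by linarith
        have hHp : (0:ℝ) < (H:ℝ) := by linarith
        have hd2 : (0:ℝ) < ((d:ℝ)+2)^ε := by positivity
        nlinarith [sq_nonneg ((H:ℝ))]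
    _ = _ := by ring
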